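/- Fix n ≥ 2, m ∈ ℝⁿ and s ∈ ℝ, and define the polynomial F(x) = (Σ_{i=1}^n m_i x_i)·(Σ_{j=1}^n Π_{k≠j} x_k) − s·Π_{k=1}^n x_k. Then F(u) ≥ 0 for all u ∈ ℝⁿ_{≥0} if and only if m_i ≥ 0 for all i and Σ_{i=1}^n m_i + 2 Σ_{1≤i<j≤n} √(m_i)√(m_j) ≥ s (equivalently, (Σ_{i=1}^n √(m_i))² ≥ s). -/

import Mathlib

lemma sq_sum_expand (n : ℕ) (a : Fin n → ℝ) :
    (∑ i, a i)^2 = ∑ i, (a i)^2 + 2 * ∑ i, ∑ j ∈ Finset.univ.filter (fun j => i < j), a i * a j := by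
  have key : ∀ i : Fin n, (∑ j, a i * a j)
      = (a i)^2 + ((∑ j ∈ Finset.univ.filter (fun j => j < i), a i * a j)
        + ∑ j ∈ Finset.univ.filter (fun j => i < j), a i * a j) := by
    intro i
    rw [← Finset.sum_filter_add_sum_filter_not Finset.univ (fun j => i < j)
      (fun j => a i * a j)]
    have hi : i ∈ Finset.univ.filter (fun j => ¬ i < j) := by simp
    have herase : (Finset.univ.filter (fun j : Fin n => ¬ i < j)).erase i
        = Finset.univ.filter (fun j => j < i) := by
      ext j
      simp only [Finset.mem_erase, Finset.mem_filter, Finset.mem_univ, true_and, not_lt]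
      constructor
      · rintro ⟨hne, hle⟩; exact lt_of_le_of_ne hle hne
      · intro h; exact ⟨ne_of_lt h, le_of_lt h⟩
    rw [← Finset.add_sum_erase _ _ hi, herase, sq]
    ring
  have swap : (∑ i, ∑ j ∈ Finset.univ.filter (fun j => j < i), a i * a j)
      = ∑ i, ∑ j ∈ Finset.univ.filter (fun j => i < j), a i * a j := by
    rw [Finset.sum_comm' (t' := Finset.univ)
      (s' := fun j => Finset.univ.filter (fun i => j < i)) (by intro x y; simp)]
    apply Finset.sum_congr rfl
    intro j _
    apply Finset.sum_congr rfl
    intro i _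
    ring
  calc (∑ i, a i)^2 = ∑ i, ∑ j, a i * a j := by rw [sq, Finset.sum_mul_sum]
    _ = ∑ i, ((a i)^2 + ((∑ j ∈ Finset.univ.filter (fun j => j < i), a i * a j)
        + ∑ j ∈ Finset.univ.filter (fun j => i < j), a i * a j)) :=
      Finset.sum_congr rfl (fun i _ => key i)
    _ = _ := by rw [Finset.sum_add_distrib, Finset.sum_add_distrib, swap]; ring

lemma cauchy_banana (n : ℕ) (m u : Fin n → ℝ) (hm : ∀ i, 0 ≤ m i) (hu : ∀ i, 0 < u i) :
    (∑ i, Real.sqrt (m i))^2 ≤ (∑ i, m i * u i) * (∑ i, (u i)⁻¹) := by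
  have h := Finset.sum_mul_sq_le_sq_mul_sq Finset.univ
    (fun i => Real.sqrt (m i * u i)) (fun i => (Real.sqrt (u i))⁻¹)
  have e1 : ∀ i : Fin n, Real.sqrt (m i * u i) * (Real.sqrt (u i))⁻¹ = Real.sqrt (m i) := by
    intro i
    rw [Real.sqrt_mul (hm i), mul_inv_cancel_right₀ (Real.sqrt_ne_zero'.mpr (hu i))]
  have e2 : ∀ i : Fin n, Real.sqrt (m i * u i) ^ 2 = m i * u i := fun i =>
    Real.sq_sqrt (mul_nonneg (hm i) (hu i).le)
  have e3 : ∀ i : Fin n, ((Real.sqrt (u i))⁻¹) ^ 2 = (u i)⁻¹ := by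
    intro i
    rw [inv_pow, Real.sq_sqrt (hu i).le]
  simp only [e1, e2, e3] at h
  exact h

lemma sum_prod_erase_eq (n : ℕ) (u : Fin n → ℝ) (hu : ∀ i, u i ≠ 0) :
    (∑ j, ∏ k ∈ Finset.univ.erase j, u k) = (∏ k, u k) * ∑ j, (u j)⁻¹ := by
  rw [Finset.mul_sum]
  apply Finset.sum_congr rfl
  intro j _
  rw [eq_mul_inv_iff_mul_eq₀ (hu j)]
  exact Finset.prod_erase_mul _ _ (Finset.mem_univ j)

/-- The copositive cone of the banana graph with `n` internal edges: the second
Symanzik polynomial `F(x) = (Σᵢ mᵢxᵢ)·(Σⱼ Π_{k≠j} x_k) − s·Π_k x_k` is nonnegative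
on the nonnegative orthant iff all `mᵢ ≥ 0` and
`Σᵢ mᵢ + 2 Σ_{i<j} √mᵢ√mⱼ ≥ s`. -/
theorem banana_copositive (n : ℕ) (hn : 2 ≤ n) (m : Fin n → ℝ) (s : ℝ) :
    (∀ u : Fin n → ℝ, (∀ i, 0 ≤ u i) →
      0 ≤ (∑ i, m i * u i) * (∑ j, ∏ k ∈ Finset.univ.erase j, u k) - s * ∏ k, u k)
    ↔ ((∀ i, 0 ≤ m i) ∧
        s ≤ (∑ i, m i) + 2 * ∑ i, ∑ j ∈ Finset.univ.filter (fun j => i < j),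
          Real.sqrt (m i) * Real.sqrt (m j)) := by
  have hn1 : (1 : ℝ) ≤ (n : ℝ) - 1 := by
    have : (2 : ℝ) ≤ (n : ℝ) := by exact_mod_cast hn
    linarith
  constructor
  · intro h
    -- Step 1: all masses are nonnegative
    have hm : ∀ i, 0 ≤ m i := by
      intro i
      by_contra hneg
      push_neg at hneg
      set C : ℝ := ∑ j ∈ Finset.univ.erase i, m j with hCdef
      set a : ℝ := m i * ((n : ℝ) - 1) with hadef
      have ha : a < 0 := mul_neg_of_neg_of_pos hneg (by linarith)
      set b : ℝ := m i + C * ((n : ℝ) - 1) - s with hbdef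
      set t : ℝ := (|b| + |C| + 1) / (-a) + 1 with htdef
      have ht1 : 1 ≤ t := by
        rw [htdef]
        have : 0 ≤ (|b| + |C| + 1) / (-a) :=
          div_nonneg (by positivity) (by linarith)
        linarith
      have ht0 : 0 ≤ t := by linarith
      have ht2 : |b| + |C| + 1 ≤ (-a) * t := by
        rw [htdef, mul_add, mul_one, mul_div_cancel₀ _ (by linarith : -a ≠ 0)]
        linarith
      set u : Fin n → ℝ := fun k => if k = i then t else 1 with hudef
      have hupos : ∀ k, 0 ≤ u k := by
        intro k
        by_cases hk : k = i <;> simp [hudef, hk, ht0]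
      have hSum1 : (∑ j, m j * u j) = m i * t + C := by
        rw [← Finset.add_sum_erase Finset.univ (fun j => m j * u j) (Finset.mem_univ i)]
        have : u i = t := by simp [hudef]
        rw [this]
        congr 1
        apply Finset.sum_congr rfl
        intro j hj
        have : u j = 1 := by simp [hudef, Finset.ne_of_mem_erase hj]
        rw [this, mul_one]
      have hProd : (∏ k, u k) = t := by
        rw [← Finset.mul_prod_erase Finset.univ u (Finset.mem_univ i)]
        have h1 : u i = t := by simp [hudef]
        have h2 : (∏ k ∈ Finset.univ.erase i, u k) = 1 :=
          Finset.prod_eq_one fun k hk => by simp [hudef, Finset.ne_of_mem_erase hk]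
        rw [h1, h2, mul_one]
      have hSum2 : (∑ j, ∏ k ∈ Finset.univ.erase j, u k) = 1 + ((n : ℝ) - 1) * t := by
        rw [← Finset.add_sum_erase Finset.univ (fun j => ∏ k ∈ Finset.univ.erase j, u k)
          (Finset.mem_univ i)]
        have h1 : (∏ k ∈ Finset.univ.erase i, u k) = 1 :=
          Finset.prod_eq_one fun k hk => by simp [hudef, Finset.ne_of_mem_erase hk]
        have h2 : (∑ j ∈ Finset.univ.erase i, ∏ k ∈ Finset.univ.erase j, u k)
            = ((n : ℝ) - 1) * t := by
          have hterm : ∀ j ∈ Finset.univ.erase i, (∏ k ∈ Finset.univ.erase j, u k) = t := by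
            intro j hj
            have hji : j ≠ i := Finset.ne_of_mem_erase hj
            have hij : i ∈ Finset.univ.erase j := by
              simp [Finset.mem_erase, Ne.symm hji]
            rw [← Finset.mul_prod_erase _ u hij]
            have h3 : u i = t := by simp [hudef]
            have h4 : (∏ k ∈ (Finset.univ.erase j).erase i, u k) = 1 :=
              Finset.prod_eq_one fun k hk => by
                simp [hudef, Finset.ne_of_mem_erase hk]
            rw [h3, h4, mul_one]
          rw [Finset.sum_congr rfl hterm, Finset.sum_const,
            Finset.card_erase_of_mem (Finset.mem_univ i), Finset.card_univ,
            Fintype.card_fin, nsmul_eq_mul]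
          congr 1
          have h5 : (1 : ℕ) ≤ n := by omega
          push_cast [Nat.cast_sub h5]
          ring
        rw [h1, h2]
      have hkey := h u hupos
      rw [hSum1, hProd, hSum2] at hkey
      have hexp : (m i * t + C) * (1 + ((n : ℝ) - 1) * t) - s * t
          = a * t^2 + b * t + C := by
        rw [hadef, hbdef]; ring
      rw [hexp] at hkey
      nlinarith [le_abs_self b, le_abs_self C, abs_nonneg b, abs_nonneg C,
        mul_le_mul_of_nonneg_left ht2 ht0]
    refine ⟨hm, ?_⟩
    -- Step 2: the inequality
    set T : ℝ := ∑ i, Real.sqrt (m i) with hTdef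
    have hT : 0 ≤ T := Finset.sum_nonneg fun i _ => Real.sqrt_nonneg _
    have hexp : (∑ i, m i) + 2 * ∑ i, ∑ j ∈ Finset.univ.filter (fun j => i < j),
        Real.sqrt (m i) * Real.sqrt (m j) = T^2 := by
      rw [hTdef, sq_sum_expand n (fun i => Real.sqrt (m i))]
      congr 1
      apply Finset.sum_congr rfl
      intro i _
      exact (Real.sq_sqrt (hm i)).symm
    rw [hexp]
    apply le_of_forall_pos_le_add
    intro ε hε
    set δ : ℝ := ε / ((n : ℝ) * T + 1) with hδdef
    have hnT : 0 < (n : ℝ) * T + 1 := by positivity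
    have hδ : 0 < δ := div_pos hε hnT
    set u : Fin n → ℝ := fun i => (Real.sqrt (m i) + δ)⁻¹ with hudef
    have hud : ∀ i, 0 < Real.sqrt (m i) + δ := fun i => by
      have := Real.sqrt_nonneg (m i); linarith
    have hu : ∀ i, 0 < u i := fun i => inv_pos.mpr (hud i)
    have hP : 0 < ∏ k, u k := Finset.prod_pos fun k _ => hu k
    have hkey := h u (fun i => (hu i).le)
    rw [sum_prod_erase_eq n u (fun i => (hu i).ne')] at hkey
    have hinv : (∑ j, (u j)⁻¹) = T + (n : ℝ) * δ := by
      have : ∀ j : Fin n, (u j)⁻¹ = Real.sqrt (m j) + δ := fun j => by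
        rw [hudef]; exact inv_inv _
      rw [Finset.sum_congr rfl (fun j _ => this j), Finset.sum_add_distrib,
        Finset.sum_const, Finset.card_univ, Fintype.card_fin, nsmul_eq_mul, hTdef]
    rw [hinv] at hkey
    have hMU0 : 0 ≤ ∑ i, m i * u i :=
      Finset.sum_nonneg fun i _ => mul_nonneg (hm i) (hu i).le
    have hMU : (∑ i, m i * u i) ≤ T := by
      rw [hTdef]
      apply Finset.sum_le_sum
      intro i _
      rw [hudef, ← div_eq_mul_inv, div_le_iff₀ (hud i)]
      nlinarith [Real.sq_sqrt (hm i), Real.sqrt_nonneg (m i)]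
    -- from hkey : 0 ≤ (∑ m u) * ((∏ u) * (T + nδ)) - s * ∏ u
    have hTnδ : 0 ≤ T + (n : ℝ) * δ := by positivity
    have hstep : s * (∏ k, u k) ≤ (T * (T + (n : ℝ) * δ)) * (∏ k, u k) := by
      have h1 : (∑ i, m i * u i) * ((∏ k, u k) * (T + (n : ℝ) * δ))
          = ((∑ i, m i * u i) * (T + (n : ℝ) * δ)) * (∏ k, u k) := by ring
      have h2 : ((∑ i, m i * u i) * (T + (n : ℝ) * δ)) ≤ T * (T + (n : ℝ) * δ) :=
        mul_le_mul_of_nonneg_right hMU hTnδ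
      nlinarith [hkey, mul_le_mul_of_nonneg_right h2 hP.le]
    have hs' : s ≤ T * (T + (n : ℝ) * δ) := (mul_le_mul_iff_of_pos_right hP).mp hstep
    have hfin : T * (T + (n : ℝ) * δ) ≤ T^2 + ε := by
      have hc : δ * ((n : ℝ) * T + 1) = ε := by
        rw [hδdef]; field_simp
      have : (n : ℝ) * T * δ ≤ ε := by
        nlinarith [hc, hδ.le, mul_nonneg (show (0:ℝ) ≤ (n:ℝ)*T by positivity) hδ.le]
      nlinarith
    linarith
  · rintro ⟨hm, hs⟩ u hu
    set T : ℝ := ∑ i, Real.sqrt (m i) with hTdef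
    have hexp : (∑ i, m i) + 2 * ∑ i, ∑ j ∈ Finset.univ.filter (fun j => i < j),
        Real.sqrt (m i) * Real.sqrt (m j) = T^2 := by
      rw [hTdef, sq_sum_expand n (fun i => Real.sqrt (m i))]
      congr 1
      apply Finset.sum_congr rfl
      intro i _
      exact (Real.sq_sqrt (hm i)).symm
    rw [hexp] at hs
    by_cases hz : ∃ k, u k = 0
    · obtain ⟨k, hk⟩ := hz
      have hP : (∏ k, u k) = 0 := Finset.prod_eq_zero (Finset.mem_univ k) hk
      rw [hP, mul_zero, sub_zero]
      exact mul_nonneg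
        (Finset.sum_nonneg fun i _ => mul_nonneg (hm i) (hu i))
        (Finset.sum_nonneg fun j _ => Finset.prod_nonneg fun k _ => hu k)
    · push_neg at hz
      have hu' : ∀ i, 0 < u i := fun i => lt_of_le_of_ne (hu i) (Ne.symm (hz i))
      have hP : 0 < ∏ k, u k := Finset.prod_pos fun k _ => hu' k
      rw [sum_prod_erase_eq n u (fun i => (hu' i).ne')]
      have hcs := cauchy_banana n m u hm hu'
      have hsP : s * (∏ k, u k) ≤ ((∑ i, m i * u i) * (∑ i, (u i)⁻¹)) * (∏ k, u k) :=
        mul_le_mul_of_nonneg_right (hs.trans hcs) hP.le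
      have e : (∑ i, m i * u i) * ((∏ k, u k) * ∑ j, (u j)⁻¹)
          = ((∑ i, m i * u i) * (∑ i, (u i)⁻¹)) * (∏ k, u k) := by ring
      rw [e]
      linarith
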